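/- For all real r ≥ 1 and α ≥ 2, one has 1 + 2^{α(r+1)-1} ≥ (1 + 2^r)^α. -/

import Mathlib

lemma aux_arith (A B u v : ℝ) (hA0 : 0 < A) (h1 : A - 1 ≤ v * A)
    (h2 : 1 + u ≤ B) (h3' : v ≤ 8 * u) :
    2 * (9 * A) ≤ 2 + 16 * (A * B) := by
  nlinarith [mul_le_mul_of_nonneg_left h2 (by positivity : (0:ℝ) ≤ 16 * A),
    mul_nonneg (sub_nonneg.2 h3') hA0.le]

-- Auxiliary: 2 * 3^α ≤ 2 + 4^α for α ≥ 2
lemma aux_B (α : ℝ) (hα : 2 ≤ α) : 2 * (3:ℝ) ^ α ≤ 2 + (4:ℝ) ^ α := by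
  set t : ℝ := α - 2 with htdef
  have ht : 0 ≤ t := by linarith
  set A : ℝ := (3:ℝ) ^ t with hAdef
  set B : ℝ := ((4:ℝ)/3) ^ t with hBdef
  have hA0 : 0 < A := Real.rpow_pos_of_pos (by norm_num) t
  have hB0 : 0 < B := Real.rpow_pos_of_pos (by norm_num) t
  have hexpA : A = Real.exp (t * Real.log 3) := by
    rw [hAdef, Real.rpow_def_of_pos (by norm_num), mul_comm]
  have hexpB : B = Real.exp (t * Real.log (4/3)) := by
    rw [hBdef, Real.rpow_def_of_pos (by norm_num), mul_comm]
  have h1 : A - 1 ≤ t * Real.log 3 * A := by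
    have := Real.add_one_le_exp (-(t * Real.log 3))
    rw [Real.exp_neg, ← hexpA] at this
    have h' := mul_le_mul_of_nonneg_right this hA0.le
    rw [inv_mul_cancel₀ hA0.ne'] at h'
    nlinarith
  have h2 : 1 + t * Real.log (4/3) ≤ B := by
    have := Real.add_one_le_exp (t * Real.log (4/3))
    rw [← hexpB] at this; linarith
  have h3 : Real.log 3 ≤ 8 * Real.log (4/3) := by
    have : ((3:ℝ)) ≤ ((4:ℝ)/3) ^ (8:ℕ) := by norm_num
    calc Real.log 3 ≤ Real.log (((4:ℝ)/3) ^ (8:ℕ)) :=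
          Real.log_le_log (by norm_num) this
      _ = 8 * Real.log (4/3) := by rw [Real.log_pow]; norm_num
  have hL : 0 ≤ Real.log (4/3) := Real.log_nonneg (by norm_num)
  have h3a : (3:ℝ) ^ α = 9 * A := by
    rw [hAdef, show α = t + 2 by ring, Real.rpow_add (by norm_num)]
    rw [show (2:ℝ) = ((2:ℕ):ℝ) by norm_num, Real.rpow_natCast]
    ring
  have h4a : (4:ℝ) ^ α = 16 * (A * B) := by
    have h4 : (4:ℝ) ^ t = A * B := by
      rw [hAdef, hBdef, ← Real.mul_rpow (by norm_num) (by norm_num)]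
      norm_num
    rw [show α = t + 2 by ring, Real.rpow_add (by norm_num), h4]
    rw [show (2:ℝ) = ((2:ℕ):ℝ) by norm_num, Real.rpow_natCast]
    ring
  rw [h3a, h4a]
  -- need : 18 * A ≤ 2 + 16 * A * B
  have h3' : t * Real.log 3 ≤ 8 * (t * Real.log (4/3)) := by
    have := mul_le_mul_of_nonneg_left h3 ht
    linarith
  exact aux_arith A B (t * Real.log (4/3)) (t * Real.log 3) hA0 h1 h2 h3'

-- Key inequality
lemma aux_C (α : ℝ) (hα : 2 ≤ α) {x : ℝ} (hx : 2 ≤ x) :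
    (1 + x) ^ α ≤ 1 + (2:ℝ) ^ (α - 1) * x ^ α := by
  set f : ℝ → ℝ := fun y => 1 + (2:ℝ) ^ (α - 1) * y ^ α - (1 + y) ^ α with hf
  have hder : ∀ y : ℝ, 0 < y →
      HasDerivAt f ((2:ℝ) ^ (α - 1) * (α * y ^ (α - 1)) - α * (1 + y) ^ (α - 1)) y := by
    intro y hy0
    have d1 : HasDerivAt (fun y : ℝ => y ^ α) (α * y ^ (α - 1)) y :=
      Real.hasDerivAt_rpow_const (Or.inl hy0.ne')
    have d2 : HasDerivAt (fun y : ℝ => (1 + y) ^ α) (α * (1 + y) ^ (α - 1)) y := by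
      have h := (Real.hasDerivAt_rpow_const (x := 1 + y) (p := α)
        (Or.inl (by positivity))).comp y ((hasDerivAt_id y).const_add 1)
      simpa [Function.comp_def] using h
    exact ((d1.const_mul _).const_add 1).sub d2
  have hmono : MonotoneOn f (Set.Ici (2:ℝ)) := by
    apply monotoneOn_of_deriv_nonneg (convex_Ici 2)
    · intro y hy
      exact (hder y (by linarith [Set.mem_Ici.mp hy])).continuousAt.continuousWithinAt
    · intro y hy
      rw [interior_Ici] at hy
      exact (hder y (by linarith [Set.mem_Ioi.mp hy])).differentiableAt.differentiableWithinAt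
    · intro y hy
      rw [interior_Ici] at hy
      have hy2 : (2:ℝ) < y := Set.mem_Ioi.mp hy
      have hy0 : (0:ℝ) < y := by linarith
      rw [(hder y hy0).deriv]
      have key : (1 + y) ^ (α - 1) ≤ (2:ℝ) ^ (α - 1) * y ^ (α - 1) := by
        rw [← Real.mul_rpow (by norm_num) hy0.le]
        exact Real.rpow_le_rpow (by positivity) (by linarith) (by linarith)
      have hα0 : (0:ℝ) ≤ α := by linarith
      nlinarith [Real.rpow_nonneg (by positivity : (0:ℝ) ≤ 1 + y) (α - 1)]
  have hf2 : 0 ≤ f 2 := by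
    have hB := aux_B α hα
    have e1 : (2:ℝ) ^ (α - 1) * (2:ℝ) ^ α = (2:ℝ) ^ (2 * α - 1) := by
      rw [← Real.rpow_add (by norm_num)]; ring_nf
    have h42 : (4:ℝ) = (2:ℝ) ^ (2:ℝ) := by
      have h := Real.rpow_natCast (2:ℝ) 2
      rw [show ((2:ℕ):ℝ) = (2:ℝ) by norm_num] at h
      rw [h]; norm_num
    have e2 : (4:ℝ) ^ α = 2 * (2:ℝ) ^ (2 * α - 1) := by
      rw [h42, ← Real.rpow_mul (by norm_num : (0:ℝ) ≤ 2),
        show (2:ℝ) * α = 1 + (2 * α - 1) by ring,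
        Real.rpow_add (by norm_num : (0:ℝ) < 2), Real.rpow_one]
      ring_nf
    have e3 : (1:ℝ) + 2 = 3 := by norm_num
    simp only [hf, e3, e1]
    rw [e2] at hB
    linarith
  have := hmono (Set.mem_Ici.mpr (le_refl (2:ℝ))) (Set.mem_Ici.mpr hx) hx
  have hfx : 0 ≤ f x := le_trans hf2 this
  simp only [hf] at hfx
  linarith

theorem stmt_5 (r α : ℝ) (hr : 1 ≤ r) (hα : 2 ≤ α) :
    (1 + (2 : ℝ) ^ r) ^ α ≤ 1 + (2 : ℝ) ^ (α * (r + 1) - 1) := by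
  have hx : (2:ℝ) ≤ (2:ℝ) ^ r := by
    calc (2:ℝ) = (2:ℝ) ^ (1:ℝ) := (Real.rpow_one 2).symm
      _ ≤ (2:ℝ) ^ r := Real.rpow_le_rpow_of_exponent_le one_le_two hr
  have hrw : (2:ℝ) ^ (α * (r + 1) - 1) = (2:ℝ) ^ (α - 1) * ((2:ℝ) ^ r) ^ α := by
    rw [← Real.rpow_mul (by norm_num : (0:ℝ) ≤ 2), ← Real.rpow_add (by norm_num : (0:ℝ) < 2)]
    ring_nf
  rw [hrw]
  exact aux_C α hα hx
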